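/- Let I ⊆ ℝ be an open interval and U ⊆ ℝⁿ an open set. Let f : I × U → ℝⁿ be continuous, and let ψ : I × U → ℝᵐ be continuously differentiable. Suppose Λ : I × U → M_{m×n}(ℝ) is a continuous matrix-valued function such that for every continuously differentiable curve x : I → U, Λ(t, x(t)) · (ẋ(t) − f(t, x(t))) = d/dt [ψ(t, x(t))] for all t ∈ I. Then Λ(t, x) = ∂ₓψ(t, x) and Λ(t, x) · f(t, x) = −∂ₜψ(t, x) for all (t, x) ∈ I × U. In particular, the conservation law multiplier of the form Λ(t, x) associated with ψ is unique and equals the Jacobian ∂ₓψ. -/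

import Mathlib

/-- If `Λ` is a conservation law multiplier of `F(t,x,ẋ) = ẋ - f(t,x)`
associated with `ψ`, i.e. `Λ(t,x(t)) ⬝ (ẋ(t) - f(t,x(t))) = d/dt ψ(t,x(t))` along **all**
C¹ curves `x : I → U`, then `Λ(t,x) = ∂ₓψ(t,x)` (the Jacobian of `ψ` in `x`) and
`Λ(t,x) f(t,x) = -∂ₜψ(t,x)` on `I × U`; in particular such a multiplier is unique. -/
theorem multiplier_correspondence_identities {n m : ℕ}
    (I : Set ℝ) (hIopen : IsOpen I) (hIinterval : I.OrdConnected)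
    (U : Set (Fin n → ℝ)) (hUopen : IsOpen U)
    (f : ℝ → (Fin n → ℝ) → (Fin n → ℝ))
    (hf_cont : ContinuousOn (fun p : ℝ × (Fin n → ℝ) => f p.1 p.2) (I ×ˢ U))
    (ψ : ℝ → (Fin n → ℝ) → (Fin m → ℝ))
    (hψ : ContDiffOn ℝ 1 (fun p : ℝ × (Fin n → ℝ) => ψ p.1 p.2) (I ×ˢ U))
    (Λ : ℝ → (Fin n → ℝ) → Matrix (Fin m) (Fin n) ℝ)
    (hΛ_cont : ContinuousOn (fun p : ℝ × (Fin n → ℝ) => Λ p.1 p.2) (I ×ˢ U))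
    (hmult : ∀ x : ℝ → (Fin n → ℝ), ContDiffOn ℝ 1 x I → Set.MapsTo x I U →
      ∀ t ∈ I, (Λ t (x t)).mulVec (deriv x t - f t (x t))
        = deriv (fun s => ψ s (x s)) t) :
    ∀ t ∈ I, ∀ x ∈ U,
      Λ t x = LinearMap.toMatrix'
          (fderiv ℝ (fun v => ψ t v) x : (Fin n → ℝ) →ₗ[ℝ] (Fin m → ℝ)) ∧
      (Λ t x).mulVec (f t x) = - deriv (fun s => ψ s x) t := by
  intro t₀ ht x₀ hx
  set Φ := fun p : ℝ × (Fin n → ℝ) => ψ p.1 p.2 with hΦdef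
  have hopen : IsOpen (I ×ˢ U) := hIopen.prod hUopen
  have hmem : (t₀, x₀) ∈ I ×ˢ U := ⟨ht, hx⟩
  have hΦdiff : DifferentiableAt ℝ Φ (t₀, x₀) :=
    (hψ.differentiableOn one_ne_zero).differentiableAt (hopen.mem_nhds hmem)
  set D := fderiv ℝ Φ (t₀, x₀) with hDdef
  -- constant curve
  have hconst := hmult (fun _ => x₀) contDiffOn_const (fun s _ => hx) t₀ ht
  rw [deriv_const] at hconst
  have hψt : HasDerivAt (fun s => ψ s x₀) (D (1, 0)) t₀ := by
    have h1 : HasDerivAt (fun s : ℝ => (s, x₀)) ((1:ℝ), (0 : Fin n → ℝ)) t₀ :=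
      HasDerivAt.prodMk (hasDerivAt_id t₀) (hasDerivAt_const t₀ x₀)
    exact hΦdiff.hasFDerivAt.comp_hasDerivAt t₀ h1
  have h2 : (Λ t₀ x₀).mulVec (f t₀ x₀) = - deriv (fun s => ψ s x₀) t₀ := by
    rw [← hconst, zero_sub, Matrix.mulVec_neg, neg_neg]
  have key : ∀ v, (Λ t₀ x₀).mulVec v = D (0, v) := by
    intro v
    obtain ⟨ε, hε, hball⟩ := Metric.isOpen_iff.1 hUopen x₀ hx
    have hv1 : (0:ℝ) < ‖v‖ + 1 := by positivity
    set a := ε / (2 * (‖v‖ + 1)) with ha_def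
    have ha : 0 < a := by positivity
    set g := fun s : ℝ => a * Real.sin ((s - t₀) / a) with hgdef
    set c := fun s : ℝ => x₀ + g s • v with hcdef
    have hg' : HasDerivAt g 1 t₀ := by
      have h1 : HasDerivAt (fun s : ℝ => (s - t₀) / a) (1 / a) t₀ := by
        simpa using ((hasDerivAt_id t₀).sub_const t₀).div_const a
      have hsin : HasDerivAt (fun s : ℝ => Real.sin ((s - t₀)/a))
          (Real.cos ((t₀ - t₀)/a) * (1/a)) t₀ := (Real.hasDerivAt_sin _).comp t₀ h1
      have h3 := hsin.const_mul a
      have : a * (Real.cos ((t₀ - t₀)/a) * (1/a)) = 1 := by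
        rw [sub_self, zero_div, Real.cos_zero, one_mul, mul_one_div, div_self ha.ne']
      rw [this] at h3
      exact h3
    have hc' : HasDerivAt c v t₀ := by
      have := (hg'.smul_const v).const_add x₀
      rw [one_smul] at this
      exact this
    have hcC1 : ContDiffOn ℝ 1 c I := by
      apply ContDiff.contDiffOn
      have hg : ContDiff ℝ 1 g :=
        contDiff_const.mul (Real.contDiff_sin.comp ((contDiff_id.sub contDiff_const).div_const a))
      exact contDiff_const.add (hg.smul contDiff_const)
    have hmaps : Set.MapsTo c I U := by
      intro s _
      apply hball
      have hd : dist (c s) x₀ = ‖g s • v‖ := by simp [hcdef, dist_eq_norm]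
      rw [Metric.mem_ball, hd, norm_smul]
      have hgs : ‖g s‖ ≤ a := by
        rw [hgdef, Real.norm_eq_abs, abs_mul, abs_of_pos ha]
        nlinarith [Real.abs_sin_le_one ((s - t₀)/a), abs_nonneg (Real.sin ((s - t₀)/a))]
      have : ‖g s‖ * ‖v‖ ≤ a * (‖v‖ + 1) :=
        mul_le_mul hgs (by linarith [norm_nonneg v]) (norm_nonneg v) ha.le
      have heq : a * (‖v‖ + 1) = ε / 2 := by
        rw [ha_def]; field_simp
      linarith
    have hcurve := hmult c hcC1 hmaps t₀ ht
    have hc0 : c t₀ = x₀ := by simp [hcdef, hgdef]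
    have hψx : HasDerivAt (fun s => ψ s (c s)) (D (1, v)) t₀ := by
      have h1 : HasDerivAt (fun s => (s, c s)) ((1:ℝ), v) t₀ := HasDerivAt.prodMk (hasDerivAt_id t₀) hc'
      have hΦ' : HasFDerivAt Φ D (t₀, c t₀) := by rw [hc0]; exact hΦdiff.hasFDerivAt
      exact hΦ'.comp_hasDerivAt t₀ h1
    rw [hc'.deriv, hc0, hψx.deriv] at hcurve
    have hc0' : (Λ t₀ x₀).mulVec (0 - f t₀ x₀) = D (1, 0) := by rw [hconst, hψt.deriv]
    have hsplit : (Λ t₀ x₀).mulVec v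
        = (Λ t₀ x₀).mulVec (v - f t₀ x₀) - (Λ t₀ x₀).mulVec (0 - f t₀ x₀) := by
      have hvv : v - f t₀ x₀ - (0 - f t₀ x₀) = v := by abel
      rw [← Matrix.mulVec_sub, hvv]
    rw [hsplit, hcurve, hc0', ← map_sub]
    congr 1
    simp [Prod.ext_iff]
  refine ⟨?_, h2⟩
  have hinr : HasFDerivAt (fun y : Fin n → ℝ => ((t₀ : ℝ), y))
      (((0 : (Fin n → ℝ) →L[ℝ] ℝ)).prod (ContinuousLinearMap.id ℝ _)) x₀ :=
    HasFDerivAt.prodMk (hasFDerivAt_const t₀ x₀) (hasFDerivAt_id x₀)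
  have hcomp : HasFDerivAt (fun y => ψ t₀ y)
      (D.comp (((0 : (Fin n → ℝ) →L[ℝ] ℝ)).prod (ContinuousLinearMap.id ℝ _))) x₀ :=
    hΦdiff.hasFDerivAt.comp x₀ hinr
  have hlin : Matrix.toLin' (Λ t₀ x₀)
      = (fderiv ℝ (fun v => ψ t₀ v) x₀ : (Fin n → ℝ) →ₗ[ℝ] (Fin m → ℝ)) := by
    apply LinearMap.ext; intro w
    rw [Matrix.toLin'_apply, key w, hcomp.fderiv]
    simp
  rw [← hlin, LinearMap.toMatrix'_toLin']
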